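/- Let c ≥ 1 and n ≥ 2 be real numbers, and define y_0 = 0, y_{k+1} = (1 + 1/c)·y_k + 1/(n·c). Then there exists a natural number K ≤ c + 2·c·ln(n) + 1 such that y_K ≥ 1. -/

import Mathlib

theorem augmentation_reaches_one (c n : ℝ) (hc : 1 ≤ c) (hn : 2 ≤ n)
    (y : ℕ → ℝ) (h0 : y 0 = 0)
    (hrec : ∀ k, y (k + 1) = (1 + 1 / c) * y k + 1 / (n * c)) :
    ∃ K : ℕ, (K : ℝ) ≤ c + 2 * c * Real.log n + 1 ∧ 1 ≤ y K := by
  have hc0 : (0:ℝ) < c := lt_of_lt_of_le one_pos hc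
  have hn0 : (0:ℝ) < n := lt_of_lt_of_le two_pos hn
  have hlogn : 0 < Real.log n := Real.log_pos (by linarith)
  -- closed form
  have hq0 : (0:ℝ) < 1 + 1/c := by positivity
  have hform : ∀ k, y k = ((1 + 1/c)^k - 1) / n := by
    intro k
    induction k with
    | zero => simp [h0]
    | succ k ih =>
      rw [hrec, ih]
      field_simp
      have hq : c * ((c + 1) / c) = c + 1 := by field_simp
      rw [pow_succ]; linear_combination (-(((c + 1) / c) ^ k)) * hq
  set x : ℝ := c + 2 * c * Real.log n with hx
  have hx0 : 0 < x := by positivity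
  refine ⟨⌈x⌉₊, ?_, ?_⟩
  · have := Nat.ceil_lt_add_one hx0.le
    linarith
  · rw [hform, le_div_iff₀ hn0]
    have hKx : x ≤ (⌈x⌉₊ : ℝ) := Nat.le_ceil x
    -- key: (1+1/c)^K ≥ n + 1
    have hlogq : 1/(c+1) ≤ Real.log (1 + 1/c) := by
      have h1 : Real.exp (1/(c+1)) ≤ 1 + 1/c := by
        have h2 : 1 - 1/(c+1) + 1 ≤ Real.exp (-(1/(c+1))) + 1 := by
          have := Real.add_one_le_exp (-(1/(c+1)))
          linarith
        have h3 : (0:ℝ) < 1 - 1/(c+1) := by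
          rw [sub_pos, div_lt_one (by linarith)]; linarith
        have h4 : Real.exp (1/(c+1)) ≤ 1 / (1 - 1/(c+1)) := by
          rw [le_div_iff₀ h3]
          have : Real.exp (1/(c+1)) * (1 - 1/(c+1)) ≤
              Real.exp (1/(c+1)) * Real.exp (-(1/(c+1))) := by
            apply mul_le_mul_of_nonneg_left (by linarith) (Real.exp_pos _).le
          rw [← Real.exp_add] at this
          simpa using this
        have h5 : 1 / (1 - 1/(c+1)) = 1 + 1/c := by
          field_simp
          rw [add_sub_cancel_right, div_self hc0.ne']
        linarith [h4, h5.le]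
      calc 1/(c+1) = Real.log (Real.exp (1/(c+1))) := (Real.log_exp _).symm
        _ ≤ Real.log (1 + 1/c) := Real.log_le_log (Real.exp_pos _) h1
    have hpow : n + 1 ≤ (1 + 1/c)^(⌈x⌉₊) := by
      have hKlog : Real.log n + 1/2 ≤ (⌈x⌉₊ : ℝ) * Real.log (1 + 1/c) := by
        have h6 : x * (1/(c+1)) ≤ (⌈x⌉₊ : ℝ) * Real.log (1 + 1/c) := by
          apply mul_le_mul hKx hlogq (by positivity) (by positivity)
        have h7 : Real.log n + 1/2 ≤ x * (1/(c+1)) := by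
          have : x * (1/(c+1)) = x / (c+1) := by ring
          rw [this, le_div_iff₀ (by linarith : (0:ℝ) < c+1), hx]
          nlinarith [hlogn.le]
        linarith
      have h8 : Real.exp (Real.log n + 1/2) ≤ Real.exp ((⌈x⌉₊ : ℝ) * Real.log (1 + 1/c)) :=
        Real.exp_le_exp.mpr hKlog
      have h9 : Real.exp ((⌈x⌉₊ : ℝ) * Real.log (1 + 1/c)) = (1 + 1/c)^(⌈x⌉₊) := by
        rw [Real.exp_nat_mul, Real.exp_log hq0]
      have h10 : Real.exp (Real.log n + 1/2) = n * Real.exp (1/2) := by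
        rw [Real.exp_add, Real.exp_log hn0]
      have h11 : (3/2:ℝ) ≤ Real.exp (1/2) := by
        have := Real.add_one_le_exp (1/2:ℝ)
        linarith
      have h12 : n + 1 ≤ n * Real.exp (1/2) := by nlinarith
      linarith [h8, h9.le, h9.ge, h10.le]
    nlinarith [hpow]
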